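/- Let γ ≠ 0, κ(x) = tanh(x/√2), b_γ(x) = tanh((|x| - c_γ)/√2) with c_γ = (1/√2) sinh⁻¹(-2√2/γ), and let E_γ(u) = (1/2)∫|u'|² + (γ/2)|u(0)|² + (1/4)∫(1-|u|²)². Then E_γ(b_γ) - E_γ(κ) = -Θ_γ² (γ/2 + (2√2/3)Θ_γ), where Θ_γ = tanh(-c_γ/√2). In particular E_γ(b_γ) < E_γ(κ) if γ > 0 and E_γ(b_γ) > E_γ(κ) if γ < 0. -/

import Mathlib

open MeasureTheory

open Set Filter Real Topology

lemma one_sub_tanh_sq (t : ℝ) : 1 - Real.tanh t ^ 2 = 1 / Real.cosh t ^ 2 := by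
  have h := Real.cosh_sq_sub_sinh_sq t
  have hc := (Real.cosh_pos t).ne'
  rw [Real.tanh_eq_sinh_div_cosh]
  field_simp
  exact h

lemma hasDerivAt_tanh' (t : ℝ) : HasDerivAt Real.tanh (1 / Real.cosh t ^ 2) t := by
  have hc := (Real.cosh_pos t).ne'
  have h := (Real.hasDerivAt_sinh t).div (Real.hasDerivAt_cosh t) hc
  have h2 : HasDerivAt Real.tanh
      ((Real.cosh t * Real.cosh t - Real.sinh t * Real.sinh t) / Real.cosh t ^ 2) t :=
    h.congr_of_eventuallyEq (Eventually.of_forall fun y => Real.tanh_eq_sinh_div_cosh y)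
  convert h2 using 1
  have h3 := Real.cosh_sq_sub_sinh_sq t
  field_simp
  nlinarith

lemma hasDerivAt_Q (t : ℝ) :
    HasDerivAt (fun t => Real.tanh t - Real.tanh t ^ 3 / 3) ((1 / Real.cosh t ^ 2) ^ 2) t := by
  have h := hasDerivAt_tanh' t
  have h2 := h.sub ((h.pow 3).div_const 3)
  refine HasDerivAt.congr_deriv h2 ?_
  push_cast
  rw [← one_sub_tanh_sq t]
  ring

lemma tanh_eq' (t : ℝ) : Real.tanh t = 1 - 2 / (Real.exp t ^ 2 + 1) := by
  rw [Real.tanh_eq_sinh_div_cosh, Real.sinh_eq, Real.cosh_eq, Real.exp_neg]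
  have h1 : Real.exp t ≠ 0 := (Real.exp_pos t).ne'
  have h2 : Real.exp t ^ 2 + 1 ≠ 0 := by positivity
  field_simp
  ring

lemma tendsto_tanh_atTop : Tendsto Real.tanh atTop (𝓝 1) := by
  have h : Tendsto (fun t : ℝ => Real.exp t ^ 2 + 1) atTop atTop := by
    apply tendsto_atTop_mono (f := Real.exp) (fun t => by nlinarith [Real.exp_pos t])
      Real.tendsto_exp_atTop
  have h2 : Tendsto (fun t : ℝ => 1 - 2 / (Real.exp t ^ 2 + 1)) atTop (𝓝 (1 - 0)) :=
    tendsto_const_nhds.sub (tendsto_const_nhds.div_atTop h)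
  rw [show (1:ℝ) - 0 = 1 by ring] at h2
  exact h2.congr fun t => (tanh_eq' t).symm

lemma tendsto_Q_atTop :
    Tendsto (fun t => Real.tanh t - Real.tanh t ^ 3 / 3) atTop (𝓝 (2/3)) := by
  have := tendsto_tanh_atTop.sub ((tendsto_tanh_atTop.pow 3).div_const 3)
  norm_num at this
  convert this using 2


lemma cont_sech4 (a : ℝ) :
    Continuous fun x : ℝ => (1 / Real.cosh ((x - a) / Real.sqrt 2) ^ 2) ^ 2 := by
  have : Continuous fun x : ℝ => Real.cosh ((x - a) / Real.sqrt 2) ^ 2 :=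
    (Real.continuous_cosh.comp ((continuous_id.sub continuous_const).div_const _)).pow 2
  exact (continuous_const.div this fun x => by positivity).pow 2

lemma sech4_le (u : ℝ) : (1 / Real.cosh u ^ 2) ^ 2 ≤ 16 * Real.exp (-(4 * u)) := by
  have hexp : Real.exp u / 2 ≤ Real.cosh u := by
    rw [Real.cosh_eq]; have := Real.exp_pos (-u); linarith
  have hpos : (0:ℝ) < Real.exp u / 2 := by positivity
  have e4 : Real.exp (4 * u) = Real.exp u ^ 4 := by
    rw [show (4:ℝ) * u = u + (u + (u + u)) by ring, Real.exp_add, Real.exp_add, Real.exp_add]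
    ring
  calc (1 / Real.cosh u ^ 2) ^ 2 ≤ (1 / (Real.exp u / 2) ^ 2) ^ 2 := by gcongr
    _ = 16 * Real.exp (-(4 * u)) := by
        rw [Real.exp_neg, e4]
        have := (Real.exp_pos u).ne'
        field_simp
        ring

set_option maxHeartbeats 1000000 in
lemma integrableOn_sech4 (a : ℝ) :
    IntegrableOn (fun x => (1 / Real.cosh ((x - a) / Real.sqrt 2) ^ 2) ^ 2) (Ioi (0:ℝ)) := by
  have hs : (0:ℝ) < Real.sqrt 2 := by positivity
  have hint : IntegrableOn
      (fun x : ℝ => (16 * Real.exp (4 * a / Real.sqrt 2)) * Real.exp (-((4 / Real.sqrt 2) * x)))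
      (Ioi (0:ℝ)) := by
    have h := (exp_neg_integrableOn_Ioi (0:ℝ) (b := 4 / Real.sqrt 2) (by positivity)).const_mul
      (16 * Real.exp (4 * a / Real.sqrt 2))
    simpa [neg_mul, IntegrableOn] using h
  refine Integrable.mono' hint (cont_sech4 a).aestronglyMeasurable ?_
  filter_upwards with x
  have key := sech4_le ((x - a) / Real.sqrt 2)
  have heq : 16 * Real.exp (-(4 * ((x - a) / Real.sqrt 2)))
      = 16 * Real.exp (4 * a / Real.sqrt 2) * Real.exp (-(4 / Real.sqrt 2 * x)) := by
    rw [mul_assoc, ← Real.exp_add]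
    congr 1
    field_simp
    ring
  rw [Real.norm_eq_abs, abs_of_nonneg (by positivity)]
  calc (1 / Real.cosh ((x - a) / Real.sqrt 2) ^ 2) ^ 2
      ≤ 16 * Real.exp (-(4 * ((x - a) / Real.sqrt 2))) := key
    _ = _ := heq

lemma eval_Ioi (a : ℝ) :
    ∫ x in Ioi (0:ℝ), (1 / Real.cosh ((x - a) / Real.sqrt 2) ^ 2) ^ 2
      = Real.sqrt 2 * (2/3 - (Real.tanh (-a / Real.sqrt 2)
          - Real.tanh (-a / Real.sqrt 2) ^ 3 / 3)) := by
  have hs : (0:ℝ) < Real.sqrt 2 := by positivity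
  set F : ℝ → ℝ := fun x => Real.sqrt 2 *
    (Real.tanh ((x - a) / Real.sqrt 2) - Real.tanh ((x - a) / Real.sqrt 2) ^ 3 / 3) with hF
  have hFd : ∀ x : ℝ, HasDerivAt F ((1 / Real.cosh ((x - a) / Real.sqrt 2) ^ 2) ^ 2) x := by
    intro x
    have h1 : HasDerivAt (fun x : ℝ => (x - a) / Real.sqrt 2) (1 / Real.sqrt 2) x := by
      simpa using ((hasDerivAt_id x).sub_const a).div_const (Real.sqrt 2)
    have h2 := ((hasDerivAt_Q ((x - a) / Real.sqrt 2)).comp x h1).const_mul (Real.sqrt 2)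
    refine HasDerivAt.congr_deriv h2 ?_
    rw [mul_comm, mul_assoc, one_div_mul_cancel hs.ne', mul_one]
  have htop : Tendsto F atTop (𝓝 (Real.sqrt 2 * (2/3))) := by
    have harg : Tendsto (fun x : ℝ => (x - a) / Real.sqrt 2) atTop atTop := by
      apply Tendsto.atTop_div_const hs
      simpa [sub_eq_add_neg] using tendsto_atTop_add_const_right atTop (-a) tendsto_id
    exact (tendsto_Q_atTop.comp harg).const_mul _
  have := integral_Ioi_of_hasDerivAt_of_tendsto' (fun x _ => hFd x) (integrableOn_sech4 a) htop
  rw [this]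
  simp only [hF, zero_sub, neg_div]
  ring

/-- The energy `E_γ(u) = (1/2)∫|u'|² + (γ/2)|u(0)|² + (1/4)∫(1-|u|²)²` for real-valued `u`. -/
noncomputable def EgammaR (γ : ℝ) (u : ℝ → ℝ) : ℝ :=
  (1/2) * (∫ x : ℝ, (deriv u x) ^ 2) + (γ/2) * (u 0) ^ 2
    + (1/4) * (∫ x : ℝ, (1 - (u x) ^ 2) ^ 2)

set_option maxHeartbeats 1000000 in
/-- Energy comparison between the soliton `b_γ` and the kink `κ`:
`E_γ(b_γ) - E_γ(κ) = -Θ_γ²(γ/2 + (2√2/3)Θ_γ)`; hence `E_γ(b_γ) < E_γ(κ)` iff `γ > 0`. -/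
theorem energy_b_gamma_vs_kink (γ : ℝ) (hγ : γ ≠ 0) :
    let cγ : ℝ := (1 / Real.sqrt 2) * Real.arsinh (-(2 * Real.sqrt 2) / γ)
    let Θ : ℝ := Real.tanh (-cγ / Real.sqrt 2)
    let κ : ℝ → ℝ := fun x => Real.tanh (x / Real.sqrt 2)
    let b : ℝ → ℝ := fun x => Real.tanh ((|x| - cγ) / Real.sqrt 2)
    EgammaR γ b - EgammaR γ κ = -Θ ^ 2 * (γ / 2 + (2 * Real.sqrt 2 / 3) * Θ) ∧
    (0 < γ → EgammaR γ b < EgammaR γ κ) ∧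
    (γ < 0 → EgammaR γ κ < EgammaR γ b) := by
  intro cγ Θ κ b
  have hs : (0:ℝ) < Real.sqrt 2 := by positivity
  have hs2 : Real.sqrt 2 * Real.sqrt 2 = 2 := Real.mul_self_sqrt (by norm_num)
  have h12 : (1 / Real.sqrt 2) ^ 2 = 1/2 := by rw [div_pow, one_pow, sq, hs2]
  have hκ0 : κ 0 = 0 := by simp [κ]
  have hb0 : b 0 = Θ := by simp [b, Θ, zero_sub, neg_div]
  -- the Θ relation
  have hv : Real.sinh (2 * (cγ / Real.sqrt 2)) = -(2 * Real.sqrt 2) / γ := by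
    have harg : 2 * (cγ / Real.sqrt 2) = Real.arsinh (-(2 * Real.sqrt 2) / γ) := by
      show 2 * ((1 / Real.sqrt 2) * Real.arsinh (-(2 * Real.sqrt 2) / γ) / Real.sqrt 2) = _
      field_simp
      rw [Real.sq_sqrt (by norm_num)]
    rw [harg, Real.sinh_arsinh]
  have hrel : γ * Θ = Real.sqrt 2 * (1 - Θ ^ 2) := by
    have hΘv : Θ = -(Real.sinh (cγ / Real.sqrt 2) / Real.cosh (cγ / Real.sqrt 2)) := by
      show Real.tanh (-cγ / Real.sqrt 2) = _
      rw [neg_div, Real.tanh_neg, Real.tanh_eq_sinh_div_cosh]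
    have hC := Real.cosh_pos (cγ / Real.sqrt 2)
    have hC' := hC.ne'
    have hcs := Real.cosh_sq_sub_sinh_sq (cγ / Real.sqrt 2)
    have e1 : γ * (2 * Real.sinh (cγ / Real.sqrt 2) * Real.cosh (cγ / Real.sqrt 2))
        = -(2 * Real.sqrt 2) := by
      rw [← Real.sinh_two_mul, hv]; field_simp
    rw [hΘv]
    field_simp
    linear_combination (-1/2) * e1 - Real.sqrt 2 * hcs
  -- derivative of κ
  have hκd : ∀ x : ℝ, deriv κ x = 1 / Real.cosh (x / Real.sqrt 2) ^ 2 * (1 / Real.sqrt 2) := by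
    intro x
    have h1 : HasDerivAt (fun y : ℝ => y / Real.sqrt 2) (1 / Real.sqrt 2) x := by
      simpa using (hasDerivAt_id x).div_const (Real.sqrt 2)
    exact ((hasDerivAt_tanh' (x / Real.sqrt 2)).comp x h1).deriv
  have habs : ∀ x : ℝ, Real.cosh (|x| / Real.sqrt 2) = Real.cosh (x / Real.sqrt 2) := by
    intro x
    rw [show |x| / Real.sqrt 2 = |x / Real.sqrt 2| by rw [abs_div, abs_of_pos hs], Real.cosh_abs]
  -- κ kinetic integral
  have hIκ1 : ∫ x : ℝ, (deriv κ x) ^ 2 = 2 * ((1/2) * (Real.sqrt 2 * (2/3))) := by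
    calc ∫ x : ℝ, (deriv κ x) ^ 2
        = ∫ x : ℝ, (fun t => (1/2) * (1 / Real.cosh ((t - 0) / Real.sqrt 2) ^ 2) ^ 2) |x| := by
          refine integral_congr_ae (Eventually.of_forall fun x => ?_)
          show _ = (1/2) * (1 / Real.cosh ((|x| - 0) / Real.sqrt 2) ^ 2) ^ 2
          simp only [sub_zero, habs x]
          rw [hκd x, mul_pow, h12]
          ring
      _ = 2 * ∫ x in Ioi (0:ℝ), (1/2) * (1 / Real.cosh ((x - 0) / Real.sqrt 2) ^ 2) ^ 2 :=
          integral_comp_abs (f := fun t => (1/2) * (1 / Real.cosh ((t - 0) / Real.sqrt 2) ^ 2) ^ 2)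
      _ = 2 * ((1/2) * (Real.sqrt 2 * (2/3))) := by
          rw [integral_const_mul, eval_Ioi 0]
          norm_num
  -- κ potential integral
  have hIκ2 : ∫ x : ℝ, (1 - (κ x) ^ 2) ^ 2 = 2 * (Real.sqrt 2 * (2/3)) := by
    calc ∫ x : ℝ, (1 - (κ x) ^ 2) ^ 2
        = ∫ x : ℝ, (fun t => (1 / Real.cosh ((t - 0) / Real.sqrt 2) ^ 2) ^ 2) |x| := by
          refine integral_congr_ae (Eventually.of_forall fun x => ?_)
          show _ = (1 / Real.cosh ((|x| - 0) / Real.sqrt 2) ^ 2) ^ 2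
          simp only [sub_zero, habs x]
          rw [show (1 : ℝ) - (κ x) ^ 2 = 1 / Real.cosh (x / Real.sqrt 2) ^ 2 from
            one_sub_tanh_sq (x / Real.sqrt 2)]
      _ = 2 * ∫ x in Ioi (0:ℝ), (1 / Real.cosh ((x - 0) / Real.sqrt 2) ^ 2) ^ 2 :=
          integral_comp_abs (f := fun t => (1 / Real.cosh ((t - 0) / Real.sqrt 2) ^ 2) ^ 2)
      _ = 2 * (Real.sqrt 2 * (2/3)) := by
          rw [eval_Ioi 0]
          norm_num
  -- derivative of b away from 0
  have hbd : ∀ x : ℝ, x ≠ 0 →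
      (deriv b x) ^ 2 = (1/2) * (1 / Real.cosh ((|x| - cγ) / Real.sqrt 2) ^ 2) ^ 2 := by
    intro x hx
    have hm12 : (-1 / Real.sqrt 2 : ℝ) ^ 2 = 1/2 := by
      rw [div_pow, neg_one_sq, sq, hs2]
    rcases hx.lt_or_gt with hneg | hpos
    · have hev : b =ᶠ[𝓝 x] (Real.tanh ∘ fun y : ℝ => (-y - cγ) / Real.sqrt 2) := by
        filter_upwards [eventually_lt_nhds hneg] with y hy
        simp [b, Function.comp, abs_of_neg hy]
      have h1 : HasDerivAt (fun y : ℝ => (-y - cγ) / Real.sqrt 2) (-1 / Real.sqrt 2) x := by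
        simpa using ((hasDerivAt_id x).neg.sub_const cγ).div_const (Real.sqrt 2)
      have h2 := (hasDerivAt_tanh' ((-x - cγ) / Real.sqrt 2)).comp x h1
      have h3 := h2.congr_of_eventuallyEq hev
      rw [h3.deriv, abs_of_neg hneg, mul_pow, hm12]
      ring
    · have hev : b =ᶠ[𝓝 x] (Real.tanh ∘ fun y : ℝ => (y - cγ) / Real.sqrt 2) := by
        filter_upwards [eventually_gt_nhds hpos] with y hy
        simp [b, Function.comp, abs_of_pos hy]
      have h1 : HasDerivAt (fun y : ℝ => (y - cγ) / Real.sqrt 2) (1 / Real.sqrt 2) x := by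
        simpa using ((hasDerivAt_id x).sub_const cγ).div_const (Real.sqrt 2)
      have h2 := (hasDerivAt_tanh' ((x - cγ) / Real.sqrt 2)).comp x h1
      have h3 := h2.congr_of_eventuallyEq hev
      rw [h3.deriv, abs_of_pos hpos, mul_pow, h12]
      ring
  have h0ae : ∀ᵐ x : ℝ, x ≠ 0 := by
    rw [ae_iff]
    simp only [not_not, setOf_eq_eq_singleton]
    exact measure_singleton 0
  -- b kinetic integral
  have hIb1 : ∫ x : ℝ, (deriv b x) ^ 2
      = 2 * ((1/2) * (Real.sqrt 2 * (2/3 - (Θ - Θ ^ 3 / 3)))) := by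
    calc ∫ x : ℝ, (deriv b x) ^ 2
        = ∫ x : ℝ, (fun t => (1/2) * (1 / Real.cosh ((t - cγ) / Real.sqrt 2) ^ 2) ^ 2) |x| := by
          refine integral_congr_ae ?_
          filter_upwards [h0ae] with x hx
          exact hbd x hx
      _ = 2 * ∫ x in Ioi (0:ℝ), (1/2) * (1 / Real.cosh ((x - cγ) / Real.sqrt 2) ^ 2) ^ 2 :=
          integral_comp_abs (f := fun t => (1/2) * (1 / Real.cosh ((t - cγ) / Real.sqrt 2) ^ 2) ^ 2)
      _ = 2 * ((1/2) * (Real.sqrt 2 * (2/3 - (Θ - Θ ^ 3 / 3)))) := by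
          rw [integral_const_mul, eval_Ioi cγ]
  -- b potential integral
  have hIb2 : ∫ x : ℝ, (1 - (b x) ^ 2) ^ 2
      = 2 * (Real.sqrt 2 * (2/3 - (Θ - Θ ^ 3 / 3))) := by
    calc ∫ x : ℝ, (1 - (b x) ^ 2) ^ 2
        = ∫ x : ℝ, (fun t => (1 / Real.cosh ((t - cγ) / Real.sqrt 2) ^ 2) ^ 2) |x| := by
          refine integral_congr_ae (Eventually.of_forall fun x => ?_)
          show (1 - (b x) ^ 2) ^ 2 = (1 / Real.cosh ((|x| - cγ) / Real.sqrt 2) ^ 2) ^ 2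
          rw [show (1 : ℝ) - (b x) ^ 2 = 1 / Real.cosh ((|x| - cγ) / Real.sqrt 2) ^ 2 from
            one_sub_tanh_sq ((|x| - cγ) / Real.sqrt 2)]
      _ = 2 * ∫ x in Ioi (0:ℝ), (1 / Real.cosh ((x - cγ) / Real.sqrt 2) ^ 2) ^ 2 :=
          integral_comp_abs (f := fun t => (1 / Real.cosh ((t - cγ) / Real.sqrt 2) ^ 2) ^ 2)
      _ = 2 * (Real.sqrt 2 * (2/3 - (Θ - Θ ^ 3 / 3))) := by
          rw [eval_Ioi cγ]
  -- the difference
  have hdiff : EgammaR γ b - EgammaR γ κ = -Θ ^ 2 * (γ / 2 + (2 * Real.sqrt 2 / 3) * Θ) := by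
    simp only [EgammaR, hIb1, hIb2, hIκ1, hIκ2, hκ0, hb0]
    linear_combination Θ * hrel
  -- sign facts
  have hΘ2 : Θ ^ 2 < 1 := by
    have h1 := one_sub_tanh_sq (-cγ / Real.sqrt 2)
    have h2 : (0:ℝ) < 1 / Real.cosh (-cγ / Real.sqrt 2) ^ 2 := by positivity
    have h3 : Θ = Real.tanh (-cγ / Real.sqrt 2) := rfl
    rw [h3]
    linarith
  have hγΘ : 0 < γ * Θ := by
    rw [hrel]
    nlinarith
  refine ⟨hdiff, fun hγp => ?_, fun hγn => ?_⟩
  · have hΘp : 0 < Θ := by nlinarith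
    have h2 : 0 < γ / 2 + (2 * Real.sqrt 2 / 3) * Θ := by
      have := mul_pos hs hΘp
      nlinarith
    have hsq : 0 < Θ ^ 2 := pow_pos hΘp 2
    nlinarith [mul_pos hsq h2]
  · have hΘn : Θ < 0 := by nlinarith
    have h2 : γ / 2 + (2 * Real.sqrt 2 / 3) * Θ < 0 := by
      have := mul_pos hs (neg_pos.mpr hΘn)
      nlinarith
    have hsq : 0 < Θ ^ 2 := by nlinarith
    nlinarith [mul_pos hsq (neg_pos.mpr h2)]
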